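/- The sequence constants → P_{p+1}(T) →(grad) W¹_p(T) →(curl) W²_p(T) →(div) P_p(T) → 0 is exact: the gradient of P_{p+1} is exactly the kernel of curl in W¹_p(T), curl W¹_p(T) is exactly the kernel of div in W²_p(T), and div maps W²_p(T) onto P_p(T). -/

import Mathlib

open MeasureTheory

/-- Partial derivative of a scalar function on ℝ³. -/
noncomputable def pd3 (f : (Fin 3 → ℝ) → ℝ) (i : Fin 3) (x : Fin 3 → ℝ) : ℝ :=
  fderiv ℝ f x (Pi.single i 1)

/-- Curl of a vector field on ℝ³. -/
noncomputable def curl3 (u : (Fin 3 → ℝ) → (Fin 3 → ℝ)) (x : Fin 3 → ℝ) : Fin 3 → ℝ :=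
  ![pd3 (fun y => u y 2) 1 x - pd3 (fun y => u y 1) 2 x,
    pd3 (fun y => u y 0) 2 x - pd3 (fun y => u y 2) 0 x,
    pd3 (fun y => u y 1) 0 x - pd3 (fun y => u y 0) 1 x]

/-- Divergence of a vector field on ℝ³. -/
noncomputable def div3 (u : (Fin 3 → ℝ) → (Fin 3 → ℝ)) (x : Fin 3 → ℝ) : ℝ :=
  ∑ i, pd3 (fun y => u y i) i x

/-- Gradient of a scalar field on ℝ³. -/
noncomputable def grad3 (f : (Fin 3 → ℝ) → ℝ) (x : Fin 3 → ℝ) : Fin 3 → ℝ :=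
  fun i => pd3 f i x

/-- Cross product in ℝ³. -/
def cross3 (a b : Fin 3 → ℝ) : Fin 3 → ℝ :=
  ![a 1 * b 2 - a 2 * b 1, a 2 * b 0 - a 0 * b 2, a 0 * b 1 - a 1 * b 0]

/-- Euclidean dot product in ℝ³. -/
def dot3 (a b : Fin 3 → ℝ) : ℝ := ∑ i, a i * b i

/-- `f` is (given by) a polynomial of total degree ≤ p. -/
def IsPoly3 (p : ℕ) (f : (Fin 3 → ℝ) → ℝ) : Prop :=
  ∃ q : MvPolynomial (Fin 3) ℝ, q.totalDegree ≤ p ∧ ∀ x, f x = MvPolynomial.eval x q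

/-- Vector field whose components are polynomials of total degree ≤ p. -/
def IsPolyVec3 (p : ℕ) (u : (Fin 3 → ℝ) → (Fin 3 → ℝ)) : Prop :=
  ∀ i, IsPoly3 p (fun x => u x i)

/-- First-family Nédélec space of degree p (as a set of vector fields). -/
def NedelecW1 (p : ℕ) : Set ((Fin 3 → ℝ) → (Fin 3 → ℝ)) :=
  {v | ∃ P Q, IsPolyVec3 p P ∧ IsPolyVec3 p Q ∧ ∀ x, v x = P x + cross3 (Q x) x}

/-- Face-element (second family) space of degree p. -/
def NedelecW2 (p : ℕ) : Set ((Fin 3 → ℝ) → (Fin 3 → ℝ)) :=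
  {v | ∃ P q, IsPolyVec3 p P ∧ IsPoly3 p q ∧ ∀ x, v x = P x + q x • x}

/-- Poincaré lifting with center a. -/
noncomputable def Rlift (a : Fin 3 → ℝ) (u : (Fin 3 → ℝ) → (Fin 3 → ℝ))
    (x : Fin 3 → ℝ) : Fin 3 → ℝ :=
  cross3 (∫ t in (0:ℝ)..1, t • u (a + t • (x - a))) (x - a)

/-- Degree-2 Poincaré lifting with center a. -/
noncomputable def Dlift (a : Fin 3 → ℝ) (u : (Fin 3 → ℝ) → ℝ)
    (x : Fin 3 → ℝ) : Fin 3 → ℝ :=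
  (∫ t in (0:ℝ)..1, t ^ 2 * u (a + t • (x - a))) • (x - a)


open MvPolynomial
namespace DR
abbrev Poly := MvPolynomial (Fin 3) ℝ

lemma hasFDerivAt_eval (q : Poly) (x : Fin 3 → ℝ) :
    HasFDerivAt (fun y : Fin 3 → ℝ => eval y q)
      (∑ j : Fin 3, eval x (pderiv j q) • ContinuousLinearMap.proj (R := ℝ) (φ := fun _ : Fin 3 => ℝ) j) x := by
  induction q using MvPolynomial.induction_on with
  | C a =>
      simp only [eval_C, pderiv_C, map_zero, zero_smul, Finset.sum_const_zero]
      exact hasFDerivAt_const a x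
  | add p q hp hq =>
      simp only [eval_add, map_add]
      simp only [add_smul, Finset.sum_add_distrib]
      exact hp.add hq
  | mul_X p n hp =>
      have h2 : HasFDerivAt (fun y : Fin 3 → ℝ => y n)
          (ContinuousLinearMap.proj (R := ℝ) (φ := fun _ : Fin 3 => ℝ) n) x := hasFDerivAt_apply n x
      have := hp.mul h2
      simp only [eval_mul, eval_X]
      refine this.congr_fderiv ?_
      ext v
      simp only [pderiv_mul, pderiv_X, map_add, eval_add, eval_mul, eval_X,
        ContinuousLinearMap.sum_apply, ContinuousLinearMap.smul_apply,
        ContinuousLinearMap.proj_apply, ContinuousLinearMap.add_apply, smul_eq_mul]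
      simp only [Pi.single_apply, apply_ite (eval x), map_one, map_zero, mul_ite, mul_one, mul_zero, add_mul, ite_mul, zero_mul,
        Finset.sum_add_distrib, Finset.sum_ite_eq, Finset.mem_univ, if_true, Finset.mul_sum]
      rw [add_comm]
      congr 1
      exact Finset.sum_congr rfl fun j _ => by ring

noncomputable def ep (q : Poly) : Poly := ∑ i : Fin 3, X i * pderiv i q

noncomputable def hc (n : ℕ) (q : Poly) : Poly := homogeneousComponent n q

lemma degree_eq_sum (d : Fin 3 →₀ ℕ) : d.degree = ∑ i : Fin 3, d i :=
  Finset.sum_subset (Finset.subset_univ _) (fun i _ hi => Finsupp.notMem_support_iff.mp hi)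

lemma degree_sub_single (d : Fin 3 →₀ ℕ) (j : Fin 3) (h : 1 ≤ d j) :
    (d - Finsupp.single j 1).degree = d.degree - 1 := by
  rw [degree_eq_sum, degree_eq_sum]
  simp only [Finsupp.tsub_apply, Finsupp.single_apply, Fin.sum_univ_three]
  fin_cases j <;> simp_all <;> omega

lemma one_le_degree (d : Fin 3 →₀ ℕ) (j : Fin 3) (h : 1 ≤ d j) : 1 ≤ d.degree := by
  rw [degree_eq_sum, Fin.sum_univ_three]
  fin_cases j <;> simp_all <;> omega

lemma sub_single_add (d : Fin 3 →₀ ℕ) (i : Fin 3) (h : d i ≠ 0) :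
    Finsupp.single i 1 + (d - Finsupp.single i 1) = d := by
  ext j
  rcases eq_or_ne j i with rfl | hj
  · simp only [Finsupp.add_apply, Finsupp.tsub_apply, Finsupp.single_eq_same]
    omega
  · simp [Finsupp.single_apply, Ne.symm hj, hj]

lemma X_mul_pderiv_monomial (i : Fin 3) (d : Fin 3 →₀ ℕ) (c : ℝ) :
    X i * pderiv i (monomial d c) = monomial d ((d i : ℝ) * c) := by
  rw [pderiv_monomial]
  rcases Nat.eq_zero_or_pos (d i) with h | h
  · simp [h]
  · rw [X, monomial_mul, one_mul, sub_single_add d i (by omega), mul_comm]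

lemma ep_monomial (d : Fin 3 →₀ ℕ) (c : ℝ) :
    ep (monomial d c) = monomial d ((d.degree : ℝ) * c) := by
  rw [ep]
  simp only [X_mul_pderiv_monomial]
  rw [← map_sum, degree_eq_sum]
  congr 1
  push_cast
  rw [Finset.sum_mul]

lemma hc_monomial (n : ℕ) (d : Fin 3 →₀ ℕ) (c : ℝ) :
    hc n (monomial d c) = if d.degree = n then monomial d c else 0 := by
  rw [hc]
  ext e
  rw [coeff_homogeneousComponent]
  rcases eq_or_ne d e with rfl | hde
  · split_ifs <;> simp_all [coeff_monomial]
  · split_ifs <;> simp_all [coeff_monomial, Ne.symm hde]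

lemma hc_add (n : ℕ) (f g : Poly) : hc n (f + g) = hc n f + hc n g := by
  simp [hc]

lemma hc_C_mul (n : ℕ) (a : ℝ) (f : Poly) : hc n (C a * f) = C a * hc n f := by
  simp [hc, homogeneousComponent_C_mul]

lemma ep_add (f g : Poly) : ep (f + g) = ep f + ep g := by
  simp [ep, mul_add, Finset.sum_add_distrib]

lemma ep_C_mul (a : ℝ) (f : Poly) : ep (C a * f) = C a * ep f := by
  simp only [ep, pderiv_C_mul, Finset.mul_sum]
  exact Finset.sum_congr rfl fun i _ => by ring

lemma hc_ep (n : ℕ) (g : Poly) : hc n (ep g) = C (n : ℝ) * hc n g := by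
  induction g using MvPolynomial.induction_on' with
  | add f g hf hg => simp only [ep_add, hc_add, hf, hg, mul_add]
  | monomial d c =>
      rw [ep_monomial, hc_monomial, hc_monomial]
      split_ifs with h
      · rw [h, C_mul_monomial]
      · simp

lemma hc_hc (n m : ℕ) (g : Poly) : hc n (hc m g) = if m = n then hc m g else 0 := by
  rw [hc, hc, homogeneousComponent_of_mem (homogeneousComponent_mem m g)]
  simp [eq_comm]

lemma tdeg_hc (n : ℕ) (g : Poly) : (hc n g).totalDegree ≤ n :=
  (homogeneousComponent_isHomogeneous n g).totalDegree_le

lemma hc_sum_of_le {N : ℕ} {g : Poly} (h : g.totalDegree ≤ N) :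
    ∑ m ∈ Finset.range (N + 1), hc m g = g := by
  simp only [hc]
  conv_rhs => rw [← sum_homogeneousComponent g]
  refine (Finset.sum_subset (Finset.range_subset_range.2 (Nat.succ_le_succ h)) fun m _ hm => ?_).symm
  rw [Finset.mem_range, not_lt] at hm
  exact homogeneousComponent_eq_zero m g (by omega)

lemma tdeg_X_mul_pderiv (i : Fin 3) (g : Poly) :
    (X i * pderiv i g).totalDegree ≤ g.totalDegree := by
  conv_lhs => rw [g.as_sum]
  rw [map_sum, Finset.mul_sum]
  refine totalDegree_finsetSum_le fun d hd => ?_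
  rw [X_mul_pderiv_monomial]
  exact le_trans (totalDegree_monomial_le _ _) (le_totalDegree hd)

lemma tdeg_ep (g : Poly) : (ep g).totalDegree ≤ g.totalDegree :=
  totalDegree_finsetSum_le fun i _ => tdeg_X_mul_pderiv i g

lemma ep_hc (m : ℕ) (g : Poly) : ep (hc m g) = C (m : ℝ) * hc m g := by
  have hd : (ep (hc m g)).totalDegree ≤ m := le_trans (tdeg_ep _) (tdeg_hc m g)
  calc ep (hc m g) = ∑ k ∈ Finset.range (m + 1), hc k (ep (hc m g)) := (hc_sum_of_le hd).symm
    _ = ∑ k ∈ Finset.range (m + 1), C (k : ℝ) * hc k (hc m g) := by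
        refine Finset.sum_congr rfl fun k _ => ?_
        rw [hc_ep]
    _ = C (m : ℝ) * hc m g := by
        rw [Finset.sum_eq_single m]
        · rw [hc_hc]; simp
        · intro k _ hk; rw [hc_hc]; simp [Ne.symm hk]
        · simp

lemma tdeg_pderiv {n : ℕ} {g : Poly} (j : Fin 3) (h : g.totalDegree ≤ n + 1) :
    (pderiv j g).totalDegree ≤ n := by
  conv_lhs => rw [g.as_sum]
  rw [map_sum]
  refine totalDegree_finsetSum_le fun d hd => ?_
  rw [pderiv_monomial]
  rcases Nat.eq_zero_or_pos (d j) with h0 | h0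
  · simp [h0]
  · refine le_trans (totalDegree_monomial_le _ _) ?_
    have h2 : d.degree ≤ n + 1 := le_trans (le_totalDegree hd) h
    have h3 := degree_sub_single d j h0
    have h4 := one_le_degree d j h0
    show (d - Finsupp.single j 1).degree ≤ n
    omega

lemma pderiv_hc (j : Fin 3) (n : ℕ) (g : Poly) :
    pderiv j (hc (n + 1) g) = hc n (pderiv j g) := by
  induction g using MvPolynomial.induction_on' with
  | add f g hf hg => simp only [map_add, hc_add, hf, hg]
  | monomial d c =>
      rw [hc_monomial, pderiv_monomial, hc_monomial, apply_ite (pderiv j), pderiv_monomial,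
        map_zero]
      rcases Nat.eq_zero_or_pos (d j) with h0 | h0
      · rw [h0]
        push_cast
        rw [mul_zero]
        simp
      · rw [degree_sub_single d j h0]
        have h4 := one_le_degree d j h0
        split_ifs with h1 h2 h2
        · rfl
        · omega
        · omega
        · rfl

lemma pderiv_comm' (i j : Fin 3) (g : Poly) :
    pderiv i (pderiv j g) = pderiv j (pderiv i g) := by
  rcases eq_or_ne i j with rfl | hij
  · rfl
  · induction g using MvPolynomial.induction_on' with
    | add f g hf hg => simp only [map_add, hf, hg]
    | monomial d c =>
        simp only [pderiv_monomial]
        have h1 : ∀ (a b : Fin 3), a ≠ b → ((d - Finsupp.single a 1) : Fin 3 →₀ ℕ) b = d b := by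
          intro a b hab
          rw [Finsupp.tsub_apply, Finsupp.single_apply]
          simp [hab]
        rw [h1 j i (Ne.symm hij), h1 i j hij]
        have h2 : (d - Finsupp.single j 1 - Finsupp.single i 1 : Fin 3 →₀ ℕ)
            = d - Finsupp.single i 1 - Finsupp.single j 1 := by
          ext k
          simp only [Finsupp.tsub_apply, Finsupp.single_apply]
          split_ifs <;> omega
        rw [h2]
        ring_nf

lemma hc_zero_of_tdeg_lt {n : ℕ} {g : Poly} (h : g.totalDegree < n) : hc n g = 0 :=
  homogeneousComponent_eq_zero n g h

lemma differentiable_eval (q : Poly) : Differentiable ℝ fun y : Fin 3 → ℝ => eval y q :=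
  fun x => (hasFDerivAt_eval q x).differentiableAt

lemma pd3_eval (q : Poly) (i : Fin 3) (x : Fin 3 → ℝ) :
    pd3 (fun y => eval y q) i x = eval x (pderiv i q) := by
  rw [pd3, (hasFDerivAt_eval q x).fderiv]
  simp only [ContinuousLinearMap.sum_apply, ContinuousLinearMap.smul_apply,
    ContinuousLinearMap.proj_apply, Pi.single_apply, smul_eq_mul, mul_ite, mul_one, mul_zero]
  rw [Finset.sum_ite_eq' Finset.univ i fun j => eval x (pderiv j q)]
  simp

lemma pd3_congr {f : (Fin 3 → ℝ) → ℝ} {q : Poly} (h : ∀ x, f x = eval x q) (i : Fin 3)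
    (x : Fin 3 → ℝ) : pd3 f i x = eval x (pderiv i q) := by
  rw [show f = fun y => eval y q from funext h, pd3_eval]

noncomputable def curlP (U : Fin 3 → Poly) : Fin 3 → Poly :=
  ![pderiv 1 (U 2) - pderiv 2 (U 1), pderiv 2 (U 0) - pderiv 0 (U 2),
    pderiv 0 (U 1) - pderiv 1 (U 0)]

noncomputable def divP (U : Fin 3 → Poly) : Poly := ∑ i, pderiv i (U i)

noncomputable def crossP (Q : Fin 3 → Poly) : Fin 3 → Poly :=
  ![Q 1 * X 2 - Q 2 * X 1, Q 2 * X 0 - Q 0 * X 2, Q 0 * X 1 - Q 1 * X 0]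

lemma curl3_congr {u : (Fin 3 → ℝ) → (Fin 3 → ℝ)} {U : Fin 3 → Poly}
    (h : ∀ x i, u x i = eval x (U i)) (x : Fin 3 → ℝ) (i : Fin 3) :
    curl3 u x i = eval x (curlP U i) := by
  have h0 := pd3_congr (fun y => h y 0)
  have h1 := pd3_congr (fun y => h y 1)
  have h2 := pd3_congr (fun y => h y 2)
  fin_cases i <;>
    simp [curl3, curlP, h0, h1, h2, map_sub]

lemma div3_congr {u : (Fin 3 → ℝ) → (Fin 3 → ℝ)} {U : Fin 3 → Poly}
    (h : ∀ x i, u x i = eval x (U i)) (x : Fin 3 → ℝ) :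
    div3 u x = eval x (divP U) := by
  rw [div3, divP, map_sum]
  exact Finset.sum_congr rfl fun i _ => pd3_congr (fun y => h y i) i x

lemma curlP_grad (F : Poly) (i : Fin 3) : curlP (fun j => pderiv j F) i = 0 := by
  fin_cases i <;>
    · show pderiv _ (pderiv _ F) - pderiv _ (pderiv _ F) = 0
      rw [pderiv_comm']
      exact sub_self _

lemma divP_curlP (U : Fin 3 → Poly) : divP (curlP U) = 0 := by
  simp only [divP, curlP, Fin.sum_univ_three, Matrix.cons_val_zero, Matrix.cons_val_one,
    Matrix.head_cons, map_sub]
  rw [show ((![pderiv 1 (U 2) - pderiv 2 (U 1), pderiv 2 (U 0) - pderiv 0 (U 2),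
    pderiv 0 (U 1) - pderiv 1 (U 0)] : Fin 3 → Poly) 2) = pderiv 0 (U 1) - pderiv 1 (U 0) from rfl]
  rw [map_sub, pderiv_comm' 0 1 (U 2), pderiv_comm' 0 2 (U 1), pderiv_comm' 1 2 (U 0)]
  ring

lemma pderiv_X_ne {i j : Fin 3} (h : j ≠ i) : pderiv i (X j : Poly) = 0 :=
  pderiv_X_of_ne h

set_option maxHeartbeats 1000000 in
lemma curlP_W1_aux (P Q : Fin 3 → Poly) :
    ∀ j, curlP (fun i => P i + crossP Q i) j
      = (curlP P j + C 2 * Q j + ep (Q j)) + (- divP Q) * X j := by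
  have e2 : ∀ (a b c : Poly), (![a, b, c] : Fin 3 → Poly) 2 = c := fun _ _ _ => rfl
  have d01 : pderiv (0 : Fin 3) (X (1 : Fin 3) : Poly) = 0 := pderiv_X_ne (by decide)
  have d02 : pderiv (0 : Fin 3) (X (2 : Fin 3) : Poly) = 0 := pderiv_X_ne (by decide)
  have d10 : pderiv (1 : Fin 3) (X (0 : Fin 3) : Poly) = 0 := pderiv_X_ne (by decide)
  have d12 : pderiv (1 : Fin 3) (X (2 : Fin 3) : Poly) = 0 := pderiv_X_ne (by decide)
  have d20 : pderiv (2 : Fin 3) (X (0 : Fin 3) : Poly) = 0 := pderiv_X_ne (by decide)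
  have d21 : pderiv (2 : Fin 3) (X (1 : Fin 3) : Poly) = 0 := pderiv_X_ne (by decide)
  have h0 : curlP (fun i => P i + crossP Q i) 0
      = (curlP P 0 + C 2 * Q 0 + ep (Q 0)) + (- divP Q) * X 0 := by
    simp only [curlP, crossP, divP, ep, Fin.sum_univ_three, Matrix.cons_val_zero,
      Matrix.cons_val_one, Matrix.head_cons, e2, Pi.add_apply, map_add, map_sub,
      pderiv_mul, pderiv_X_self, d01, d02, d10, d12, d20, d21, map_ofNat]
    ring
  have h1 : curlP (fun i => P i + crossP Q i) 1
      = (curlP P 1 + C 2 * Q 1 + ep (Q 1)) + (- divP Q) * X 1 := by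
    simp only [curlP, crossP, divP, ep, Fin.sum_univ_three, Matrix.cons_val_zero,
      Matrix.cons_val_one, Matrix.head_cons, e2, Pi.add_apply, map_add, map_sub,
      pderiv_mul, pderiv_X_self, d01, d02, d10, d12, d20, d21, map_ofNat]
    ring
  have h2 : curlP (fun i => P i + crossP Q i) 2
      = (curlP P 2 + C 2 * Q 2 + ep (Q 2)) + (- divP Q) * X 2 := by
    simp only [curlP, crossP, divP, ep, Fin.sum_univ_three, Matrix.cons_val_zero,
      Matrix.cons_val_one, Matrix.head_cons, e2, Pi.add_apply, map_add, map_sub,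
      pderiv_mul, pderiv_X_self, d01, d02, d10, d12, d20, d21, map_ofNat]
    ring
  intro j
  fin_cases j
  · exact h0
  · exact h1
  · exact h2

lemma isPoly3_eval {p : ℕ} (q : Poly) (h : q.totalDegree ≤ p) :
    IsPoly3 p (fun x => eval x q) := ⟨q, h, fun _ => rfl⟩

lemma part1 (p : ℕ) : ({f | IsPoly3 (p + 1) f ∧ ∀ x, grad3 f x = 0} =
    {f : (Fin 3 → ℝ) → ℝ | ∃ c : ℝ, ∀ x, f x = c}) := by
  ext f
  constructor
  · rintro ⟨⟨q, _, hq⟩, hg⟩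
    have hfd : f = fun y => eval y q := funext hq
    refine ⟨f 0, fun x => ?_⟩
    have hdiff : Differentiable ℝ f := hfd ▸ differentiable_eval q
    have hzero : ∀ y, fderiv ℝ f y = 0 := by
      intro y
      ext v
      have hv : v = ∑ i, v i • (Pi.single i 1 : Fin 3 → ℝ) := by
        funext j
        simp [Pi.single_apply, Finset.sum_apply, Finset.sum_ite_eq']
      rw [ContinuousLinearMap.zero_apply]
      conv_lhs => rw [hv]
      rw [map_sum]
      refine Finset.sum_eq_zero fun i _ => ?_
      rw [_root_.map_smul]
      have : pd3 f i y = 0 := congrFun (hg y) i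
      rw [pd3] at this
      simp [this]
    exact is_const_of_fderiv_eq_zero hdiff hzero x 0
  · rintro ⟨c, hc⟩
    have hfc : f = fun _ => c := funext hc
    constructor
    · exact ⟨C c, by simp, fun x => by simp [hc]⟩
    · intro x
      funext i
      rw [grad3, hfc, pd3]
      simp [fderiv_const]

lemma tdeg_sub {n : ℕ} {a b : Poly} (h1 : a.totalDegree ≤ n) (h2 : b.totalDegree ≤ n) :
    (a - b).totalDegree ≤ n := by
  rw [sub_eq_add_neg]
  refine le_trans (totalDegree_add _ _) (max_le h1 ?_)
  rwa [totalDegree_neg]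

lemma tdeg_mul_X {n : ℕ} {a : Poly} (i : Fin 3) (h : a.totalDegree ≤ n) :
    (a * X i).totalDegree ≤ n + 1 := by
  refine le_trans (totalDegree_mul _ _) ?_
  have := totalDegree_X (R := ℝ) i
  omega

lemma tdeg_crossP {n : ℕ} {Q : Fin 3 → Poly} (h : ∀ i, (Q i).totalDegree ≤ n) (j : Fin 3) :
    (crossP Q j).totalDegree ≤ n + 1 := by
  fin_cases j <;> exact tdeg_sub (tdeg_mul_X _ (h _)) (tdeg_mul_X _ (h _))

lemma crossP_eval (QQ : Fin 3 → Poly) (x : Fin 3 → ℝ) (j : Fin 3) :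
    eval x (crossP QQ j) = cross3 (fun i => eval x (QQ i)) x j := by
  fin_cases j <;> simp [crossP, cross3]

lemma cross3_zero_vec (x : Fin 3 → ℝ) : cross3 (fun _ => (0:ℝ)) x = 0 := by
  funext j
  fin_cases j <;> simp [cross3]

lemma part2 (p : ℕ) : ({u | u ∈ NedelecW1 p ∧ ∀ x, curl3 u x = 0} =
    {u : (Fin 3 → ℝ) → (Fin 3 → ℝ) | ∃ f, IsPoly3 (p + 1) f ∧ ∀ x, u x = grad3 f x}) := by
  ext u
  constructor
  · rintro ⟨⟨P, Q, hP, hQ, huPQ⟩, hcurl⟩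
    choose PP hPdeg hPeval using hP
    choose QQ hQdeg hQeval using hQ
    set U : Fin 3 → Poly := fun i => PP i + crossP QQ i with hU
    have hueval : ∀ x i, u x i = eval x (U i) := by
      intro x i
      have hQx : Q x = fun i => eval x (QQ i) := funext fun i => hQeval i x
      rw [huPQ x]
      show P x i + cross3 (Q x) x i = _
      rw [hQx, ← crossP_eval, show P x i = eval x (PP i) from hPeval i x,
        show U i = PP i + crossP QQ i from rfl, map_add]
    have hUdeg : ∀ i, (U i).totalDegree ≤ p + 1 := by
      intro i
      refine le_trans (totalDegree_add _ _) (max_le (le_trans (hPdeg i) (by omega))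
        (tdeg_crossP hQdeg i))
    -- curl-free as polynomials
    have hcP : ∀ i, curlP U i = 0 := by
      intro i
      refine MvPolynomial.funext fun x => ?_
      rw [← curl3_congr hueval x i, hcurl x]
      simp
    have c0 : pderiv (1:Fin 3) (U 2) = pderiv (2:Fin 3) (U 1) :=
      sub_eq_zero.mp (hcP 0)
    have c1 : pderiv (2:Fin 3) (U 0) = pderiv (0:Fin 3) (U 2) :=
      sub_eq_zero.mp (hcP 1)
    have c2 : pderiv (0:Fin 3) (U 1) = pderiv (1:Fin 3) (U 0) :=
      sub_eq_zero.mp (hcP 2)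
    have hsym : ∀ a b : Fin 3, pderiv a (U b) = pderiv b (U a) := by
      intro a b
      fin_cases a <;> fin_cases b
      · rfl
      · exact c2
      · exact c1.symm
      · exact c2.symm
      · rfl
      · exact c0
      · exact c1
      · exact c0.symm
      · rfl
    set S : Poly := ∑ i : Fin 3, X i * U i with hS
    have hSP : S = ∑ i : Fin 3, X i * PP i := by
      rw [hS, hU]
      simp only [Fin.sum_univ_three, crossP, Matrix.cons_val_zero, Matrix.cons_val_one,
        Matrix.head_cons, show ∀ (a b c : Poly), (![a, b, c] : Fin 3 → Poly) 2 = c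
          from fun _ _ _ => rfl]
      ring
    have hSdeg : S.totalDegree ≤ p + 1 := by
      rw [hSP]
      refine totalDegree_finsetSum_le fun i _ => ?_
      refine le_trans (totalDegree_mul _ _) ?_
      have := totalDegree_X (R := ℝ) i
      have := hPdeg i
      omega
    have hpdS : ∀ j, pderiv j S = U j + ep (U j) := by
      have key : ∀ j, pderiv j S = U j + ∑ i : Fin 3, X i * pderiv j (U i) := by
        have d01 : pderiv (0 : Fin 3) (X (1 : Fin 3) : Poly) = 0 := pderiv_X_ne (by decide)
        have d02 : pderiv (0 : Fin 3) (X (2 : Fin 3) : Poly) = 0 := pderiv_X_ne (by decide)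
        have d10 : pderiv (1 : Fin 3) (X (0 : Fin 3) : Poly) = 0 := pderiv_X_ne (by decide)
        have d12 : pderiv (1 : Fin 3) (X (2 : Fin 3) : Poly) = 0 := pderiv_X_ne (by decide)
        have d20 : pderiv (2 : Fin 3) (X (0 : Fin 3) : Poly) = 0 := pderiv_X_ne (by decide)
        have d21 : pderiv (2 : Fin 3) (X (1 : Fin 3) : Poly) = 0 := pderiv_X_ne (by decide)
        have h0 : pderiv (0:Fin 3) S = U 0 + ∑ i : Fin 3, X i * pderiv (0:Fin 3) (U i) := by
          rw [hS]
          simp only [Fin.sum_univ_three, map_add, pderiv_mul, pderiv_X_self,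
            d01, d02, d10, d12, d20, d21]
          ring
        have h1 : pderiv (1:Fin 3) S = U 1 + ∑ i : Fin 3, X i * pderiv (1:Fin 3) (U i) := by
          rw [hS]
          simp only [Fin.sum_univ_three, map_add, pderiv_mul, pderiv_X_self,
            d01, d02, d10, d12, d20, d21]
          ring
        have h2 : pderiv (2:Fin 3) S = U 2 + ∑ i : Fin 3, X i * pderiv (2:Fin 3) (U i) := by
          rw [hS]
          simp only [Fin.sum_univ_three, map_add, pderiv_mul, pderiv_X_self,
            d01, d02, d10, d12, d20, d21]
          ring
        intro j
        fin_cases j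
        · exact h0
        · exact h1
        · exact h2
      intro j
      rw [key j, ep]
      refine congrArg (fun s => U j + s) ?_
      exact Finset.sum_congr rfl fun i _ => by rw [hsym j i]
    set F : Poly := ∑ m ∈ Finset.range (p + 2), C (1 / ((m : ℝ) + 1)) * hc (m + 1) S with hF
    have hFdeg : F.totalDegree ≤ p + 1 := by
      refine totalDegree_finsetSum_le fun m hm => ?_
      rw [Finset.mem_range] at hm
      by_cases hmp : m + 1 ≤ p + 1
      · refine le_trans (totalDegree_mul _ _) ?_
        have h1 := totalDegree_C (R := ℝ) (σ := Fin 3) (1 / ((m : ℝ) + 1))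
        have h2 := tdeg_hc (m + 1) S
        omega
      · have hm1 : m = p + 1 := by omega
        subst hm1
        rw [hc_zero_of_tdeg_lt (by omega : S.totalDegree < p + 1 + 1)]
        simp
    have hgradF : ∀ j, pderiv j F = U j := by
      intro j
      rw [hF, map_sum]
      have step : ∀ m ∈ Finset.range (p + 2),
          pderiv j (C (1 / ((m : ℝ) + 1)) * hc (m + 1) S) = hc m (U j) := by
        intro m _
        have hne : (m : ℝ) + 1 ≠ 0 := by positivity
        have key : (1 / ((m : ℝ) + 1)) + (1 / ((m : ℝ) + 1)) * (m : ℝ) = 1 := by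
          field_simp
          ring
        rw [pderiv_C_mul, pderiv_hc, hpdS j, hc_add, hc_ep, mul_add, ← mul_assoc,
          ← map_mul, ← add_mul, ← map_add, key, map_one, one_mul]
      rw [Finset.sum_congr rfl step]
      exact hc_sum_of_le (hUdeg j)
    refine ⟨fun x => eval x F, isPoly3_eval F hFdeg, fun x => ?_⟩
    funext i
    rw [hueval x i, ← hgradF i]
    exact (pd3_eval F i x).symm
  · rintro ⟨f, ⟨F, hFdeg, hf⟩, hu⟩
    have hcomp : ∀ x i, u x i = eval x (pderiv i F) := by
      intro x i
      rw [hu x]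
      exact pd3_congr hf i x
    constructor
    · refine ⟨fun x i => eval x (pderiv i F), fun _ _ => 0, ?_, ?_, ?_⟩
      · exact fun i => isPoly3_eval _ (tdeg_pderiv i hFdeg)
      · exact fun i => ⟨0, by simp, by simp⟩
      · intro x
        funext i
        rw [cross3_zero_vec]
        simp [hcomp x i]
    · intro x
      funext i
      rw [curl3_congr hcomp x i, curlP_grad F i]
      simp

lemma degree_single_add (d : Fin 3 →₀ ℕ) (i : Fin 3) :
    (Finsupp.single i 1 + d).degree = d.degree + 1 := by
  rw [degree_eq_sum, degree_eq_sum]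
  simp only [Finsupp.add_apply, Finsupp.single_apply, Fin.sum_univ_three]
  fin_cases i <;> simp <;> omega

lemma hc_X_mul (i : Fin 3) (n : ℕ) (g : Poly) :
    hc (n + 1) (X i * g) = X i * hc n g := by
  induction g using MvPolynomial.induction_on' with
  | add f g hf hg => rw [mul_add, hc_add, hc_add, mul_add, hf, hg]
  | monomial d c =>
      rw [show (X i * monomial d c : Poly) = monomial (Finsupp.single i 1 + d) c by
        rw [X, monomial_mul, one_mul], hc_monomial, hc_monomial, degree_single_add]
      split_ifs with h1 h2 h2
      · rw [X, monomial_mul, one_mul]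
      · omega
      · omega
      · rw [mul_zero]

lemma hc_zeroc (g : Poly) : hc 0 g = C (coeff 0 g) := by
  simp [hc]

lemma hc_zero_poly (n : ℕ) : hc n (0 : Poly) = 0 := by
  simp [hc]

lemma ep_sum {ι : Type*} (s : Finset ι) (f : ι → Poly) :
    ep (∑ i ∈ s, f i) = ∑ i ∈ s, ep (f i) := by
  simp only [ep, map_sum, Finset.mul_sum]
  exact Finset.sum_comm

lemma crossP_radial (Q : Fin 3 → Poly) (R : Poly) (c : ℝ) :
    crossP (fun a => Q a + C c * (X a * R)) = crossP Q := by
  have h0 : crossP (fun a => Q a + C c * (X a * R)) 0 = crossP Q 0 := by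
    show (Q 1 + C c * (X 1 * R)) * X 2 - (Q 2 + C c * (X 2 * R)) * X 1 = Q 1 * X 2 - Q 2 * X 1
    ring
  have h1 : crossP (fun a => Q a + C c * (X a * R)) 1 = crossP Q 1 := by
    show (Q 2 + C c * (X 2 * R)) * X 0 - (Q 0 + C c * (X 0 * R)) * X 2 = Q 2 * X 0 - Q 0 * X 2
    ring
  have h2 : crossP (fun a => Q a + C c * (X a * R)) 2 = crossP Q 2 := by
    show (Q 0 + C c * (X 0 * R)) * X 1 - (Q 1 + C c * (X 1 * R)) * X 0 = Q 0 * X 1 - Q 1 * X 0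
    ring
  funext j
  fin_cases j
  · exact h0
  · exact h1
  · exact h2

lemma tdeg_curlP {n : ℕ} {W : Fin 3 → Poly} (h : ∀ a, (W a).totalDegree ≤ n + 1) (i : Fin 3) :
    (curlP W i).totalDegree ≤ n := by
  fin_cases i <;> exact tdeg_sub (tdeg_pderiv _ (h _)) (tdeg_pderiv _ (h _))

lemma part3 (p : ℕ) : ({v | v ∈ NedelecW2 p ∧ ∀ x, div3 v x = 0} =
    {v : (Fin 3 → ℝ) → (Fin 3 → ℝ) | ∃ u ∈ NedelecW1 p, ∀ x, v x = curl3 u x}) := by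
  ext v
  constructor
  · rintro ⟨⟨P, q, hP, hq, hvPq⟩, hdiv⟩
    choose PP hPdeg hPeval using hP
    obtain ⟨qq, hqdeg, hqeval⟩ := hq
    set V : Fin 3 → Poly := fun i => PP i + qq * X i with hV
    have hveval : ∀ x i, v x i = eval x (V i) := by
      intro x i
      rw [hvPq x]
      show P x i + q x * x i = _
      rw [show P x i = eval x (PP i) from hPeval i x, hqeval x,
        show V i = PP i + qq * X i from rfl, map_add, map_mul, eval_X]
    have hVdeg : ∀ i, (V i).totalDegree ≤ p + 1 := fun i =>
      le_trans (totalDegree_add _ _) (max_le (le_trans (hPdeg i) (by omega))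
        (tdeg_mul_X i hqdeg))
    have hdivP : divP V = 0 := by
      refine MvPolynomial.funext fun x => ?_
      rw [← div3_congr hveval x, hdiv x]
      simp
    set Q : Fin 3 → Poly := fun j => ∑ m ∈ Finset.range (p + 1),
      C (1 / ((m : ℝ) + 2)) * hc m (V j) with hQ
    set Q' : Fin 3 → Poly := fun j => ∑ m ∈ Finset.range (p + 2),
      C (1 / ((m : ℝ) + 2)) * hc m (V j) with hQ'
    have htop : ∀ j, hc (p + 1) (V j) = X j * hc p qq := by
      intro j
      rw [show V j = PP j + qq * X j from rfl, hc_add,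
        hc_zero_of_tdeg_lt (Nat.lt_succ_of_le (hPdeg j)), mul_comm qq (X j),
        hc_X_mul, zero_add]
    have hQ'Q : Q' = fun a => Q a + C (1 / (((p + 1 : ℕ) : ℝ) + 2)) * (X a * hc p qq) := by
      funext a
      rw [show Q' a = ∑ m ∈ Finset.range (p + 2), C (1 / ((m : ℝ) + 2)) * hc m (V a) from rfl,
        Finset.sum_range_succ, ← htop a]
    have hcross : crossP Q' = crossP Q := by
      rw [hQ'Q]
      exact crossP_radial Q (hc p qq) _
    have hdivQ' : divP Q' = 0 := by
      rw [divP]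
      have : ∀ j : Fin 3, pderiv j (Q' j)
          = ∑ m ∈ Finset.range (p + 2), C (1 / ((m : ℝ) + 2)) * pderiv j (hc m (V j)) := by
        intro j
        rw [show Q' j = ∑ m ∈ Finset.range (p + 2), C (1 / ((m : ℝ) + 2)) * hc m (V j) from rfl,
          map_sum]
        exact Finset.sum_congr rfl fun m _ => pderiv_C_mul
      simp only [this]
      rw [Finset.sum_comm]
      refine Finset.sum_eq_zero fun m _ => ?_
      rw [← Finset.mul_sum]
      cases m with
      | zero =>
          have : ∀ j : Fin 3, pderiv j (hc 0 (V j)) = 0 := fun j => by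
            rw [hc_zeroc, pderiv_C]
          rw [Fin.sum_univ_three, this 0, this 1, this 2]
          simp
      | succ k =>
          have : ∀ j : Fin 3, pderiv j (hc (k + 1) (V j)) = hc k (pderiv j (V j)) :=
            fun j => pderiv_hc j k (V j)
          simp only [this]
          have hdv : divP V = pderiv (0:Fin 3) (V 0) + pderiv (1:Fin 3) (V 1)
              + pderiv (2:Fin 3) (V 2) := Fin.sum_univ_three fun i => pderiv i (V i)
          rw [Fin.sum_univ_three, ← hc_add, ← hc_add, ← hdv, hdivP, hc_zero_poly, mul_zero]
    have hsumQ' : ∀ j, C 2 * Q' j + ep (Q' j) = V j := by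
      intro j
      rw [show Q' j = ∑ m ∈ Finset.range (p + 2), C (1 / ((m : ℝ) + 2)) * hc m (V j) from rfl,
        ep_sum, Finset.mul_sum, ← Finset.sum_add_distrib]
      rw [show ∑ m ∈ Finset.range (p + 2), (C 2 * (C (1 / ((m : ℝ) + 2)) * hc m (V j))
            + ep (C (1 / ((m : ℝ) + 2)) * hc m (V j)))
          = ∑ m ∈ Finset.range (p + 2), hc m (V j) from Finset.sum_congr rfl fun m _ => ?_]
      · exact hc_sum_of_le (hVdeg j)
      · rw [ep_C_mul, ep_hc, ← mul_assoc, ← mul_assoc, ← map_mul, ← map_mul, ← add_mul,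
          ← map_add]
        have hne : (m : ℝ) + 2 ≠ 0 := by positivity
        rw [show (2 : ℝ) * (1 / ((m : ℝ) + 2)) + 1 / ((m : ℝ) + 2) * (m : ℝ) = 1 by
          field_simp
          ring, map_one, one_mul]
    refine ⟨fun x => cross3 (fun i => eval x (Q i)) x, ⟨fun _ _ => 0, fun x i => eval x (Q i),
      fun i => ⟨0, by simp, by simp⟩, ?_, fun x => by funext i; exact (zero_add _).symm⟩, ?_⟩
    · intro i
      refine isPoly3_eval _ ?_
      rw [hQ]
      refine totalDegree_finsetSum_le fun m hm => ?_
      rw [Finset.mem_range] at hm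
      refine le_trans (totalDegree_mul _ _) ?_
      have h1 := totalDegree_C (R := ℝ) (σ := Fin 3) (1 / ((m : ℝ) + 2))
      have h2 := tdeg_hc m (V i)
      omega
    · intro x
      have hucomp : ∀ y i, cross3 (fun i => eval y (Q i)) y i = eval y (crossP Q i) :=
        fun y i => (crossP_eval Q y i).symm
      funext i
      rw [curl3_congr hucomp x i, ← hcross,
        show curlP (crossP Q') i = curlP (fun a => (fun _ => (0:Poly)) a + crossP Q' a) i
          from by congr 1; funext a; rw [zero_add], curlP_W1_aux, hveval x i]
      have hc0 : curlP (fun _ => (0:Poly)) i = 0 := by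
        fin_cases i <;> · show pderiv _ (0:Poly) - pderiv _ (0:Poly) = 0; simp
      rw [hc0, zero_add, hdivQ', neg_zero, zero_mul, add_zero, hsumQ' i]
  · rintro ⟨u, ⟨P, Q, hP, hQ, huPQ⟩, hv⟩
    choose PP hPdeg hPeval using hP
    choose QQ hQdeg hQeval using hQ
    set U : Fin 3 → Poly := fun i => PP i + crossP QQ i with hU
    have hueval : ∀ x i, u x i = eval x (U i) := by
      intro x i
      have hQx : Q x = fun i => eval x (QQ i) := funext fun i => hQeval i x
      rw [huPQ x]
      show P x i + cross3 (Q x) x i = _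
      rw [hQx, ← crossP_eval, show P x i = eval x (PP i) from hPeval i x,
        show U i = PP i + crossP QQ i from rfl, map_add]
    have hvcomp : ∀ x i, v x i = eval x (curlP U i) := by
      intro x i
      rw [hv x]
      exact curl3_congr hueval x i
    constructor
    · refine ⟨fun x i => eval x (curlP PP i + C 2 * QQ i + ep (QQ i)),
        fun x => eval x (- divP QQ), fun i => isPoly3_eval _ ?_, isPoly3_eval _ ?_, ?_⟩
      · refine le_trans (totalDegree_add _ _) (max_le (le_trans (totalDegree_add _ _)
          (max_le (tdeg_curlP (fun a => le_trans (hPdeg a) (by omega)) i) ?_))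
          (le_trans (tdeg_ep _) (hQdeg i)))
        refine le_trans (totalDegree_mul _ _) ?_
        have h1 := totalDegree_C (R := ℝ) (σ := Fin 3) (2 : ℝ)
        have h2 := hQdeg i
        omega
      · rw [totalDegree_neg, divP]
        exact totalDegree_finsetSum_le fun i _ => tdeg_pderiv i (le_trans (hQdeg i) (by omega))
      · intro x
        funext i
        rw [hvcomp x i, show U = fun i => PP i + crossP QQ i from rfl, curlP_W1_aux]
        show _ = eval x (curlP PP i + C 2 * QQ i + ep (QQ i)) + eval x (- divP QQ) * x i
        rw [map_add, map_mul, eval_X]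
    · intro x
      rw [div3_congr hvcomp x, divP_curlP]
      simp

lemma part4 (p : ℕ) : ({f | ∃ v ∈ NedelecW2 p, ∀ x, f x = div3 v x} =
    {f : (Fin 3 → ℝ) → ℝ | IsPoly3 p f}) := by
  ext f
  constructor
  · rintro ⟨v, ⟨P, q, hP, hq, hvPq⟩, hf⟩
    choose PP hPdeg hPeval using hP
    obtain ⟨qq, hqdeg, hqeval⟩ := hq
    set V : Fin 3 → Poly := fun i => PP i + qq * X i with hV
    have hveval : ∀ x i, v x i = eval x (V i) := by
      intro x i
      rw [hvPq x]
      show P x i + q x * x i = _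
      rw [show P x i = eval x (PP i) from hPeval i x, hqeval x,
        show V i = PP i + qq * X i from rfl, map_add, map_mul, eval_X]
    refine ⟨divP V, ?_, fun x => by rw [hf x, div3_congr hveval x]⟩
    rw [divP]
    refine totalDegree_finsetSum_le fun i _ => ?_
    rw [show V i = PP i + qq * X i from rfl, map_add, pderiv_mul, pderiv_X_self, mul_one]
    refine le_trans (totalDegree_add _ _) (max_le (tdeg_pderiv i (le_trans (hPdeg i) (by omega)))
      (le_trans (totalDegree_add _ _) (max_le ?_ hqdeg)))
    rw [mul_comm]
    exact le_trans (tdeg_X_mul_pderiv i qq) hqdeg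
  · rintro ⟨qf, hdeg, hfe⟩
    set qpoly : Poly := ∑ m ∈ Finset.range (p + 1), C (1 / ((m : ℝ) + 3)) * hc m qf with hqp
    have hqdeg : qpoly.totalDegree ≤ p := by
      rw [hqp]
      refine totalDegree_finsetSum_le fun m hm => ?_
      rw [Finset.mem_range] at hm
      refine le_trans (totalDegree_mul _ _) ?_
      have h1 := totalDegree_C (R := ℝ) (σ := Fin 3) (1 / ((m : ℝ) + 3))
      have h2 := tdeg_hc m qf
      omega
    set v : (Fin 3 → ℝ) → (Fin 3 → ℝ) := fun x => eval x qpoly • x with hv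
    have hvcomp : ∀ x i, v x i = eval x (qpoly * X i) := by
      intro x i
      rw [map_mul, eval_X]
      rfl
    have hdivV : divP (fun i => qpoly * X i) = qf := by
      have expand : divP (fun i => qpoly * X i) = ep qpoly + C 3 * qpoly := by
        rw [divP, ep, Fin.sum_univ_three, Fin.sum_univ_three]
        simp only [pderiv_mul, pderiv_X_self, mul_one, map_ofNat]
        ring
      rw [expand, hqp, ep_sum, Finset.mul_sum, ← Finset.sum_add_distrib]
      rw [show ∑ m ∈ Finset.range (p + 1), (ep (C (1 / ((m : ℝ) + 3)) * hc m qf)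
            + C 3 * (C (1 / ((m : ℝ) + 3)) * hc m qf))
          = ∑ m ∈ Finset.range (p + 1), hc m qf from Finset.sum_congr rfl fun m _ => ?_]
      · exact hc_sum_of_le hdeg
      · rw [ep_C_mul, ep_hc, ← mul_assoc, ← mul_assoc, ← map_mul, ← map_mul, ← add_mul,
          ← map_add]
        have hne : (m : ℝ) + 3 ≠ 0 := by positivity
        rw [show 1 / ((m : ℝ) + 3) * (m : ℝ) + (3:ℝ) * (1 / ((m : ℝ) + 3)) = 1 by
          field_simp, map_one, one_mul]
    refine ⟨v, ⟨fun _ _ => 0, fun x => eval x qpoly, fun i => ⟨0, by simp, by simp⟩,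
      isPoly3_eval qpoly hqdeg, fun x => by funext i; exact (zero_add _).symm⟩, fun x => ?_⟩
    rw [div3_congr hvcomp x, hdivV, hfe x]

end DR

/-- Exactness of the polynomial de Rham sequence
`ℝ → P_{p+1} → W¹_p → W²_p → P_p → 0` with maps: inclusion of constants, grad, curl, div. -/
theorem polynomial_deRham_exact (p : ℕ) :
    -- exactness at P_{p+1}: kernel of grad = constants
    ({f | IsPoly3 (p + 1) f ∧ ∀ x, grad3 f x = 0} =
      {f : (Fin 3 → ℝ) → ℝ | ∃ c : ℝ, ∀ x, f x = c}) ∧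
    -- exactness at W¹_p: kernel of curl = grad P_{p+1}
    ({u | u ∈ NedelecW1 p ∧ ∀ x, curl3 u x = 0} =
      {u | ∃ f, IsPoly3 (p + 1) f ∧ ∀ x, u x = grad3 f x}) ∧
    -- exactness at W²_p: kernel of div = curl W¹_p
    ({v | v ∈ NedelecW2 p ∧ ∀ x, div3 v x = 0} =
      {v | ∃ u ∈ NedelecW1 p, ∀ x, v x = curl3 u x}) ∧
    -- surjectivity of div onto P_p
    ({f | ∃ v ∈ NedelecW2 p, ∀ x, f x = div3 v x} = {f | IsPoly3 p f}) := ⟨DR.part1 p, DR.part2 p, DR.part3 p, DR.part4 p⟩
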